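/- Let X be a finite set, n ≥ 1, let k : X → ℕ satisfy ∑_a k(a) = n, and let m : X × X → ℕ satisfy ∑_b m(a,b) = k(a) for every a and ∑_a m(a,b) = k(b) for every b. Let c_1, …, c_M ∈ X^n (M ≥ 1) be codewords each of composition k. Then there exists a sequence x̄ ∈ X^n of composition k such that the number of indices j ∈ {1, …, M} for which c_j has conditional composition m from x̄ is at least M · N / S, where N = (∏_{b ∈ X} k(b)!) / (∏_{a,b ∈ X} m(a,b)!) and S = n! / ∏_{a ∈ X} k(a)!. -/

import Mathlib

open Finset

section aux

variable {X : Type*} [Fintype X] [DecidableEq X]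

private lemma comp_count : ∀ (n : ℕ) (k : X → ℕ), (∑ a, k a = n) →
    ((Finset.univ.filter fun x : Fin n → X =>
        ∀ a, (Finset.univ.filter fun i => x i = a).card = k a).card) * ∏ a, (k a).factorial
      = n.factorial := by
  intro n
  induction n with
  | zero =>
    intro k hk
    have hk0 : ∀ a, k a = 0 := by
      intro a
      exact (Finset.sum_eq_zero_iff.1 hk) a (mem_univ a)
    have h1 : (Finset.univ.filter fun x : Fin 0 → X =>
        ∀ a, (Finset.univ.filter fun i => x i = a).card = k a) = Finset.univ := by
      apply Finset.filter_true_of_mem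
      intro x _ a
      simp [hk0 a]
    rw [h1]
    simp [hk0, Finset.card_univ]
  | succ n ih =>
    intro k hk
    have hsplit : ∀ (x0 : X) (x' : Fin n → X) (a : X),
        (Finset.univ.filter fun i => (Fin.cons x0 x' : Fin (n+1) → X) i = a).card
          = (if x0 = a then 1 else 0) + (Finset.univ.filter fun i => x' i = a).card := by
      intro x0 x' a
      rw [Finset.card_filter, Fin.sum_univ_succ, Finset.card_filter]
      simp
    have hmem : ∀ (x0 : X) (x' : Fin n → X),
        (∀ a, (Finset.univ.filter fun i => (Fin.cons x0 x' : Fin (n+1) → X) i = a).card = k a)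
          ↔ (1 ≤ k x0 ∧ ∀ a, (Finset.univ.filter fun i => x' i = a).card
              = Function.update k x0 (k x0 - 1) a) := by
      intro x0 x'
      constructor
      · intro h
        have h0 := h x0
        rw [hsplit, if_pos rfl] at h0
        constructor
        · omega
        · intro a
          by_cases ha : a = x0
          · subst ha
            rw [Function.update_self]
            omega
          · rw [Function.update_of_ne ha]
            have := h a
            rw [hsplit, if_neg (fun hh => ha hh.symm)] at this
            omega
      · rintro ⟨h1, h2⟩ a
        rw [hsplit]
        by_cases ha : a = x0
        · subst ha
          rw [if_pos rfl]
          have := h2 a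
          rw [Function.update_self] at this
          omega
        · rw [if_neg (fun hh => ha hh.symm)]
          have := h2 a
          rw [Function.update_of_ne ha] at this
          omega
    -- split the card as a sum over the first letter
    have hprod : ∀ (Q : X × (Fin n → X) → Prop) [DecidablePred Q],
        (Finset.univ.filter Q).card = ∑ a, (Finset.univ.filter fun y => Q (a, y)).card := by
      intro Q _
      rw [Finset.card_filter, Fintype.sum_prod_type]
      exact Finset.sum_congr rfl fun a _ => (Finset.card_filter _ _).symm
    have hterm : ∀ a : X,
        (if 1 ≤ k a then
            (Finset.univ.filter fun x' : Fin n → X =>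
              ∀ b, (Finset.univ.filter fun i => x' i = b).card
                = Function.update k a (k a - 1) b).card else 0) * ∏ b, (k b).factorial
          = k a * n.factorial := by
      intro a
      by_cases ha : 1 ≤ k a
      · rw [if_pos ha]
        have hsum' : ∑ b, Function.update k a (k a - 1) b = n := by
          rw [Finset.sum_update_of_mem (mem_univ a)]
          have h2 : ∑ b ∈ Finset.univ \ {a}, k b + k a = n + 1 := by
            rw [← hk, ← Finset.sum_sdiff (Finset.singleton_subset_iff.2 (mem_univ a))]
            simp
          omega
        have hIH := ih _ hsum'
        have hfac : ∏ b, (k b).factorial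
            = k a * ∏ b, (Function.update k a (k a - 1) b).factorial := by
          rw [Finset.prod_eq_mul_prod_sdiff_singleton_of_mem (mem_univ a) fun b => (k b).factorial,
              Finset.prod_eq_mul_prod_sdiff_singleton_of_mem (mem_univ a)
                fun b => (Function.update k a (k a - 1) b).factorial]
          have h2 : ∏ b ∈ Finset.univ \ {a}, (Function.update k a (k a - 1) b).factorial
              = ∏ b ∈ Finset.univ \ {a}, (k b).factorial :=
            Finset.prod_congr rfl fun b hb => by
              rw [Function.update_of_ne (by simpa using (Finset.mem_sdiff.1 hb).2)]
          rw [h2, Function.update_self, ← mul_assoc, Nat.mul_factorial_pred (by omega)]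
        rw [hfac, ← mul_assoc, mul_comm _ (k a), mul_assoc, hIH]
      · rw [if_neg ha]
        have : k a = 0 := by omega
        simp [this]
    have hcard : (Finset.univ.filter fun x : Fin (n+1) → X =>
          ∀ a, (Finset.univ.filter fun i => x i = a).card = k a).card
        = ∑ a : X, if 1 ≤ k a then
            (Finset.univ.filter fun x' : Fin n → X =>
              ∀ b, (Finset.univ.filter fun i => x' i = b).card
                = Function.update k a (k a - 1) b).card else 0 := by
      have h1 : (Finset.univ.filter fun x : Fin (n+1) → X =>
            ∀ a, (Finset.univ.filter fun i => x i = a).card = k a).card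
          = (Finset.univ.filter fun p : X × (Fin n → X) =>
              ∀ a, (Finset.univ.filter fun i => (Fin.cons p.1 p.2 : Fin (n+1) → X) i = a).card = k a).card := by
        refine (Finset.card_equiv (Fin.consEquiv (fun _ => X)) fun p => ?_).symm
        simp only [Finset.mem_filter, Finset.mem_univ, true_and, Fin.consEquiv_apply]
      rw [h1, hprod]
      refine Finset.sum_congr rfl fun a _ => ?_
      by_cases ha : 1 ≤ k a
      · rw [if_pos ha]
        congr 1
        apply Finset.filter_congr
        intro x' _
        simp only [hmem a x', ha, true_and]
      · rw [if_neg ha]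
        rw [Finset.card_eq_zero, Finset.filter_eq_empty_iff]
        intro x' _ hx'
        exact ha ((hmem a x').1 hx').1
    rw [hcard, Finset.sum_mul]
    rw [Finset.sum_congr rfl fun a _ => hterm a, ← Finset.sum_mul, hk, Nat.factorial_succ]

private lemma comp_count' {ι : Type*} [Fintype ι] [DecidableEq ι] (k : X → ℕ)
    (hk : ∑ a, k a = Fintype.card ι) :
    ((Finset.univ.filter fun x : ι → X =>
        ∀ a, (Finset.univ.filter fun i => x i = a).card = k a).card) * ∏ a, (k a).factorial
      = (Fintype.card ι).factorial := by
  have e := Fintype.equivFin ι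
  rw [← comp_count (Fintype.card ι) k hk]
  congr 1
  apply Finset.card_equiv (Equiv.arrowCongr e (Equiv.refl X))
  intro x
  simp only [Finset.mem_filter, Finset.mem_univ, true_and]
  have hcnt : ∀ a, (Finset.univ.filter fun i : ι => x i = a).card
      = (Finset.univ.filter fun i' : Fin (Fintype.card ι) =>
          (Equiv.arrowCongr e (Equiv.refl X) x) i' = a).card := by
    intro a
    apply Finset.card_equiv e
    intro i
    simp [Equiv.arrowCongr]
  constructor
  · intro h a; rw [← hcnt]; exact h a
  · intro h a; rw [hcnt]; exact h a

private def fiberEquiv {ι : Type*} (y : ι → X) : (ι → X) ≃ ∀ b : X, {i // y i = b} → X where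
  toFun x := fun _ i => x i.1
  invFun f := fun i => f (y i) ⟨i, rfl⟩
  left_inv x := rfl
  right_inv f := by
    funext b i
    obtain ⟨i, hi⟩ := i
    subst hi
    rfl

private lemma condcomp_count {n : ℕ} (k : X → ℕ) (mm : X × X → ℕ)
    (hcol : ∀ b, ∑ a, mm (a, b) = k b) (y : Fin n → X)
    (hy : ∀ b, (Finset.univ.filter fun i => y i = b).card = k b) :
    ((Finset.univ.filter fun x : Fin n → X =>
        ∀ a b, (Finset.univ.filter fun i => x i = a ∧ y i = b).card = mm (a, b)).card)
      * ∏ p : X × X, (mm p).factorial = ∏ b, (k b).factorial := by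
  classical
  have hcnt : ∀ (x : Fin n → X) (a b : X),
      (Finset.univ.filter fun i => x i = a ∧ y i = b).card
        = (Finset.univ.filter fun i : {i // y i = b} => x i.1 = a).card := by
    intro x a b
    apply Finset.card_bij (fun i hi => (⟨i, (Finset.mem_filter.1 hi).2.2⟩ : {i // y i = b}))
    · intro i hi
      simp [(Finset.mem_filter.1 hi).2.1]
    · intro i hi j hj h
      simpa using congrArg Subtype.val h
    · rintro ⟨j, hj⟩ hjm
      refine ⟨j, ?_, rfl⟩
      simp only [Finset.mem_filter, Finset.mem_univ, true_and] at hjm ⊢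
      exact ⟨hjm, hj⟩
  have hcardfib : ∀ b, Fintype.card {i // y i = b} = k b := by
    intro b
    rw [Fintype.card_subtype]
    exact hy b
  -- cardinality of the conditional-composition set as a product over fibres
  have key : (Finset.univ.filter fun x : Fin n → X =>
        ∀ a b, (Finset.univ.filter fun i => x i = a ∧ y i = b).card = mm (a, b)).card
      = ∏ b, (Finset.univ.filter fun g : {i // y i = b} → X =>
          ∀ a, (Finset.univ.filter fun i => g i = a).card = mm (a, b)).card := by
    have h1 : (Finset.univ.filter fun x : Fin n → X =>
          ∀ a b, (Finset.univ.filter fun i => x i = a ∧ y i = b).card = mm (a, b))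
        = (Finset.univ.filter fun x : Fin n → X =>
          ∀ b a, (Finset.univ.filter fun i : {i // y i = b} => x i.1 = a).card = mm (a, b)) := by
      apply Finset.filter_congr
      intro x _
      constructor
      · intro h b a; rw [← hcnt]; exact h a b
      · intro h a b; rw [hcnt]; exact h b a
    rw [h1, ← Fintype.card_subtype]
    have e2 : {x : Fin n → X //
          ∀ b a, (Finset.univ.filter fun i : {i // y i = b} => x i.1 = a).card = mm (a, b)}
        ≃ ∀ b, {g : {i // y i = b} → X //
            ∀ a, (Finset.univ.filter fun i => g i = a).card = mm (a, b)} := by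
      refine Equiv.trans (Equiv.subtypeEquiv (fiberEquiv y) fun x => ?_) Equiv.subtypePiEquivPi
      exact Iff.rfl
    rw [Fintype.card_congr e2, Fintype.card_pi]
    exact Finset.prod_congr rfl fun b _ => Fintype.card_subtype _
  have hfib : ∀ b, (Finset.univ.filter fun g : {i // y i = b} → X =>
        ∀ a, (Finset.univ.filter fun i => g i = a).card = mm (a, b)).card
        * ∏ a, (mm (a, b)).factorial = (k b).factorial := by
    intro b
    have := comp_count' (ι := {i // y i = b}) (fun a => mm (a, b))
      (by rw [hcardfib b]; exact hcol b)
    rw [hcardfib b] at this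
    exact this
  have hmmprod : ∏ p : X × X, (mm p).factorial = ∏ b, ∏ a, (mm (a, b)).factorial := by
    rw [Fintype.prod_prod_type]
    exact Finset.prod_comm
  rw [key, hmmprod, ← Finset.prod_mul_distrib]
  exact Finset.prod_congr rfl fun b _ => hfib b

end aux

/-- Pigeonhole step of the Elias/Blahut scheme: among `M` codewords of composition `k`,
there is a sequence `x̄` of composition `k` such that at least `M · N / S` codewords
have conditional composition `mm` from `x̄`, where `N = (∏_b k(b)!)/(∏_{a,b} m(a,b)!)`
and `S = n! / ∏_a k(a)!`. -/
theorem stmt7 {X : Type*} [Fintype X] [DecidableEq X]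
    (n : ℕ) (hn : 1 ≤ n) (k : X → ℕ) (hk : ∑ a, k a = n)
    (mm : X × X → ℕ)
    (hrow : ∀ a, ∑ b, mm (a, b) = k a) (hcol : ∀ b, ∑ a, mm (a, b) = k b)
    (M : ℕ) (hM : 1 ≤ M) (c : Fin M → Fin n → X)
    (hc : ∀ j a, (Finset.univ.filter fun i => c j i = a).card = k a) :
    ∃ xbar : Fin n → X,
      (∀ a, (Finset.univ.filter fun i => xbar i = a).card = k a) ∧
      (M : ℝ) * (((∏ b, (k b).factorial : ℕ) : ℝ) / ((∏ p : X × X, (mm p).factorial : ℕ) : ℝ))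
          / (((n.factorial : ℕ) : ℝ) / ((∏ a, (k a).factorial : ℕ) : ℝ))
        ≤ Nat.card {j : Fin M //
            ∀ a b, (Finset.univ.filter fun i => xbar i = a ∧ c j i = b).card = mm (a, b)} := by
  classical
  set T : Finset (Fin n → X) :=
    Finset.univ.filter fun x => ∀ a, (Finset.univ.filter fun i => x i = a).card = k a with hT
  set G : Fin M → Finset (Fin n → X) := fun j =>
    Finset.univ.filter fun x =>
      ∀ a b, (Finset.univ.filter fun i => x i = a ∧ c j i = b).card = mm (a, b) with hG
  have hGT : ∀ j, G j ⊆ T := by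
    intro j x hx
    rw [hG, Finset.mem_filter] at hx
    rw [hT, Finset.mem_filter]
    refine ⟨Finset.mem_univ _, fun a => ?_⟩
    have hstep : (Finset.univ.filter fun i => x i = a).card
        = ∑ b, (Finset.univ.filter fun i => x i = a ∧ c j i = b).card := by
      rw [Finset.card_filter]
      have hb : ∀ b : X, (Finset.univ.filter fun i => x i = a ∧ c j i = b).card
          = ∑ i, if x i = a ∧ c j i = b then 1 else 0 := fun b => Finset.card_filter _ _
      simp_rw [hb]
      rw [Finset.sum_comm]
      refine Finset.sum_congr rfl fun i _ => ?_
      by_cases hxi : x i = a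
      · simp [hxi, Finset.sum_ite_eq]
      · simp [hxi]
    rw [hstep]
    calc ∑ b, (Finset.univ.filter fun i => x i = a ∧ c j i = b).card
        = ∑ b, mm (a, b) := Finset.sum_congr rfl fun b _ => hx.2 a b
      _ = k a := hrow a
  have hTcard : T.card * ∏ a, (k a).factorial = n.factorial := comp_count n k hk
  have hGcard : ∀ j, (G j).card * ∏ p : X × X, (mm p).factorial = ∏ b, (k b).factorial :=
    fun j => condcomp_count k mm hcol (c j) (hc j)
  have hTne : T.Nonempty := ⟨c ⟨0, hM⟩, by
    rw [hT, Finset.mem_filter]; exact ⟨Finset.mem_univ _, hc _⟩⟩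
  set cnt : (Fin n → X) → ℕ := fun x => (Finset.univ.filter fun j => x ∈ G j).card with hcnt
  have hsum : ∑ x ∈ T, cnt x = ∑ j, (G j).card := by
    have h1 : ∀ x, cnt x = ∑ j, if x ∈ G j then 1 else 0 :=
      fun x => Finset.card_filter _ _
    simp_rw [h1]
    rw [Finset.sum_comm]
    refine Finset.sum_congr rfl fun j _ => ?_
    rw [← Finset.card_filter]
    congr 1
    rw [Finset.filter_mem_eq_inter, Finset.inter_eq_right.2 (hGT j)]
  obtain ⟨x0, hx0T, hx0max⟩ := T.exists_max_image cnt hTne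
  have havg : ∑ j, (G j).card ≤ T.card * cnt x0 := by
    rw [← hsum]
    calc ∑ x ∈ T, cnt x ≤ ∑ x ∈ T, cnt x0 :=
          Finset.sum_le_sum fun x hx => hx0max x hx
      _ = T.card * cnt x0 := by rw [Finset.sum_const, smul_eq_mul]
  have hkey : M * ∏ b, (k b).factorial ≤ T.card * cnt x0 * ∏ p : X × X, (mm p).factorial := by
    calc M * ∏ b, (k b).factorial
        = ∑ _j : Fin M, ∏ b, (k b).factorial := by
          rw [Finset.sum_const, smul_eq_mul, Finset.card_univ, Fintype.card_fin]
      _ = ∑ j, (G j).card * ∏ p : X × X, (mm p).factorial :=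
          Finset.sum_congr rfl fun j _ => (hGcard j).symm
      _ = (∑ j, (G j).card) * ∏ p : X × X, (mm p).factorial := by rw [Finset.sum_mul]
      _ ≤ T.card * cnt x0 * ∏ p : X × X, (mm p).factorial :=
          Nat.mul_le_mul_right _ havg
  refine ⟨x0, by rw [hT, Finset.mem_filter] at hx0T; exact hx0T.2, ?_⟩
  have hNcard : Nat.card {j : Fin M //
      ∀ a b, (Finset.univ.filter fun i => x0 i = a ∧ c j i = b).card = mm (a, b)} = cnt x0 := by
    rw [Nat.card_eq_fintype_card, Fintype.card_subtype]
    congr 1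
    apply Finset.filter_congr
    intro j _
    rw [hG]
    simp only [Finset.mem_filter, Finset.mem_univ, true_and]
  rw [hNcard]
  -- pass to the reals
  have hPk : (0:ℝ) < ((∏ b, (k b).factorial : ℕ) : ℝ) :=
    Nat.cast_pos.2 (Finset.prod_pos fun _ _ => Nat.factorial_pos _)
  have hPm : (0:ℝ) < ((∏ p : X × X, (mm p).factorial : ℕ) : ℝ) :=
    Nat.cast_pos.2 (Finset.prod_pos fun _ _ => Nat.factorial_pos _)
  have hTc : (0:ℝ) < (T.card : ℝ) := Nat.cast_pos.2 (Finset.card_pos.2 hTne)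
  have hFn : ((n.factorial : ℕ) : ℝ) = (T.card : ℝ) * ((∏ a, (k a).factorial : ℕ) : ℝ) := by
    rw [← Nat.cast_mul, hTcard]
  have hkeyR : (M:ℝ) * ((∏ b, (k b).factorial : ℕ) : ℝ)
      ≤ (T.card : ℝ) * (cnt x0 : ℝ) * ((∏ p : X × X, (mm p).factorial : ℕ) : ℝ) := by
    exact_mod_cast hkey
  rw [hFn, mul_div_cancel_right₀ _ (ne_of_gt hPk), div_le_iff₀ hTc, ← mul_div_assoc,
    div_le_iff₀ hPm]
  calc (M:ℝ) * ((∏ b, (k b).factorial : ℕ) : ℝ)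
      ≤ (T.card : ℝ) * (cnt x0 : ℝ) * ((∏ p : X × X, (mm p).factorial : ℕ) : ℝ) := hkeyR
    _ = (cnt x0 : ℝ) * (T.card : ℝ) * ((∏ p : X × X, (mm p).factorial : ℕ) : ℝ) := by ring
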